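/- Let ρ be a (not necessarily invertible) density matrix on M_{kn}(ℂ) ≅ M_k(ℂ)⊗M_n(ℂ) and let σ ∈ M_n(ℂ) be the density matrix determined by tr(σB) = tr(ρ(1_k⊗B)) for all B ∈ M_n(ℂ). Then the following are equivalent: (a) there exists a conditional expectation E of M_{kn}(ℂ) onto the subalgebra 1_k⊗M_n(ℂ) with tr(ρE(A)) = tr(ρA) for all A ∈ M_{kn}(ℂ); (b) there exists a density matrix τ ∈ M_k(ℂ) such that ρ = τ⊗σ. -/

import Mathlib

open Matrix Kronecker ComplexOrder

namespace Stmt3Aux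

variable {k n : ℕ}

lemma trace_mul_std {m : Type*} [Fintype m] [DecidableEq m] (X : Matrix m m ℂ) (p q : m) :
    (X * single p q 1).trace = X q p := by
  rw [Matrix.trace, Finset.sum_eq_single q]
  · simp
  · intro b _ hb; simp [Matrix.diag, hb]
  · simp

lemma std_kron (a b : Fin k) (j j' : Fin n) :
    (single a b (1:ℂ)) ⊗ₖ (single j j' (1:ℂ)) = single (a,j) (b,j') 1 := by
  ext ⟨x, y⟩ ⟨z, w⟩
  simp [single, kroneckerMap_apply, Prod.ext_iff]
  aesop

lemma kron_conjTranspose (C : Matrix (Fin k) (Fin k) ℂ) (B : Matrix (Fin n) (Fin n) ℂ) :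
    (C ⊗ₖ B)ᴴ = Cᴴ ⊗ₖ Bᴴ := by
  ext ⟨a, j⟩ ⟨b, j'⟩
  simp [conjTranspose_apply, kroneckerMap_apply]

lemma one_kron_psd {B : Matrix (Fin n) (Fin n) ℂ} (hB : B.PosSemidef) :
    ((1 : Matrix (Fin k) (Fin k) ℂ) ⊗ₖ B).PosSemidef := by
  apply PosSemidef.of_dotProduct_mulVec_nonneg
  · show _ = _
    rw [kron_conjTranspose, conjTranspose_one, hB.isHermitian.eq]
  · intro x
    have key : star x ⬝ᵥ ((1 : Matrix (Fin k) (Fin k) ℂ) ⊗ₖ B) *ᵥ x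
        = ∑ a : Fin k, star (fun j => x (a, j)) ⬝ᵥ B *ᵥ (fun j => x (a, j)) := by
      simp only [dotProduct, mulVec, Pi.star_apply, kroneckerMap_apply, one_apply,
        Fintype.sum_prod_type, ite_mul, one_mul, zero_mul]
      have swap : ∀ (a : Fin k) (j : Fin n),
          (∑ b : Fin k, ∑ j' : Fin n, if a = b then B j j' * x (b, j') else 0)
            = ∑ j' : Fin n, B j j' * x (a, j') := by
        intro a j
        rw [Finset.sum_comm]
        simp
      simp only [swap]
    rw [key]
    exact Finset.sum_nonneg fun a _ => hB.dotProduct_mulVec_nonneg _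


lemma one_kron_std (j j' : Fin n) :
    (1 : Matrix (Fin k) (Fin k) ℂ) ⊗ₖ single j j' (1:ℂ)
      = ∑ a : Fin k, single ((a, j) : Fin k × Fin n) (a, j') 1 := by
  ext ⟨x, y⟩ ⟨z, w⟩
  simp only [kroneckerMap_apply, one_apply, single, of_apply, Prod.mk.injEq,
    Matrix.sum_apply]
  rw [Finset.sum_eq_single x]
  · aesop
  · intro b _ hb; simp; aesop
  · simp

lemma herm_pres {m : Type*} [Fintype m] [DecidableEq m]
    (E : Matrix m m ℂ →ₗ[ℂ] Matrix m m ℂ)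
    (hpos : ∀ A : Matrix m m ℂ, A.PosSemidef → (E A).PosSemidef)
    (A : Matrix m m ℂ) (hA : Aᴴ = A) : (E A)ᴴ = E A := by
  have hdec : A = (2⁻¹ : ℂ) • ((A + 1)ᴴ * (A + 1)) - (2⁻¹ : ℂ) • (Aᴴ * A + 1) := by
    rw [conjTranspose_add, hA, conjTranspose_one]
    have expand : (A + 1) * (A + 1) = A * A + A + A + 1 := by noncomm_ring
    rw [expand]
    module
  have h1 := hpos _ (posSemidef_conjTranspose_mul_self (A + 1))
  have h2 := hpos _ ((posSemidef_conjTranspose_mul_self A).add .one)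
  have hE : E A = (2⁻¹ : ℂ) • E ((A + 1)ᴴ * (A + 1)) - (2⁻¹ : ℂ) • E (Aᴴ * A + 1) := by
    conv_lhs => rw [hdec]
    simp
  rw [hE, conjTranspose_sub, conjTranspose_smul, conjTranspose_smul,
    h1.isHermitian.eq, h2.isHermitian.eq]
  norm_num

lemma star_pres {m : Type*} [Fintype m] [DecidableEq m]
    (E : Matrix m m ℂ →ₗ[ℂ] Matrix m m ℂ)
    (hpos : ∀ A : Matrix m m ℂ, A.PosSemidef → (E A).PosSemidef)
    (A : Matrix m m ℂ) : E Aᴴ = (E A)ᴴ := by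
  have hH : (E A + E Aᴴ)ᴴ = E A + E Aᴴ := by
    rw [← map_add]
    exact herm_pres E hpos _ (by simp [conjTranspose_add, add_comm])
  have hK : (Complex.I • (E A - E Aᴴ))ᴴ = Complex.I • (E A - E Aᴴ) := by
    rw [← map_sub, ← _root_.map_smul]
    refine herm_pres E hpos _ ?_
    rw [conjTranspose_smul, conjTranspose_sub, conjTranspose_conjTranspose]
    simp only [smul_sub, Complex.star_def, Complex.conj_I, neg_smul, neg_sub_neg]
  have hK' : (E A)ᴴ - (E Aᴴ)ᴴ = E Aᴴ - E A := by
    have h := congrArg (fun M => Complex.I • M) hK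
    simp only [conjTranspose_smul, smul_smul, Complex.star_def, Complex.conj_I,
      conjTranspose_sub] at h
    simpa using h
  have hH' : (E A)ᴴ + (E Aᴴ)ᴴ = E A + E Aᴴ := by
    rw [← conjTranspose_add]; exact hH
  have h2 : (2 : ℂ) • (E Aᴴ) = (2 : ℂ) • (E A)ᴴ := by
    rw [two_smul, two_smul]
    calc E Aᴴ + E Aᴴ = ((E A + E Aᴴ) - (E A + E Aᴴ - (E Aᴴ + E Aᴴ))) := by abel
    _ = (((E A)ᴴ + (E Aᴴ)ᴴ) - (E A + E Aᴴ - (E Aᴴ + E Aᴴ))) := by rw [hH']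
    _ = (E A)ᴴ + (E Aᴴ)ᴴ - (E A - E Aᴴ) := by abel
    _ = (E A)ᴴ + (E Aᴴ)ᴴ + ((E A)ᴴ - (E Aᴴ)ᴴ) := by rw [hK']; abel
    _ = (E A)ᴴ + (E A)ᴴ := by abel
  exact smul_right_injective _ (two_ne_zero (α := ℂ)) h2

lemma exists_sqrt {τ : Matrix (Fin k) (Fin k) ℂ} (hτ : τ.PosSemidef) :
    ∃ s : Matrix (Fin k) (Fin k) ℂ, sᴴ = s ∧ s * s = τ := by
  open scoped MatrixOrder in
  exact ⟨CFC.sqrt τ, (Matrix.nonneg_iff_posSemidef.mp (CFC.sqrt_nonneg τ)).isHermitian.eq,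
    CFC.sqrt_mul_sqrt_self τ (Matrix.nonneg_iff_posSemidef.mpr hτ)⟩

end Stmt3Aux

open Stmt3Aux in
/-- For a (not necessarily invertible) density matrix `ρ` on
`M_{kn}(ℂ) ≅ M_k(ℂ) ⊗ M_n(ℂ)` with partial trace `σ ∈ M_n(ℂ)`, there is a
`tr(ρ ·)`-preserving conditional expectation of `M_{kn}(ℂ)` onto the subalgebra
`1_k ⊗ M_n(ℂ)` iff `ρ = τ ⊗ σ` for some density matrix `τ ∈ M_k(ℂ)`. -/
theorem stmt_3 (k n : ℕ) (hk : 1 ≤ k) (hn : 1 ≤ n)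
    (ρ : Matrix (Fin k × Fin n) (Fin k × Fin n) ℂ)
    (hρ : ρ.PosSemidef) (hρtr : ρ.trace = 1)
    (σ : Matrix (Fin n) (Fin n) ℂ)
    (hσ : ∀ B : Matrix (Fin n) (Fin n) ℂ,
      (σ * B).trace = (ρ * ((1 : Matrix (Fin k) (Fin k) ℂ) ⊗ₖ B)).trace) :
    (∃ E : Matrix (Fin k × Fin n) (Fin k × Fin n) ℂ →ₗ[ℂ]
            Matrix (Fin k × Fin n) (Fin k × Fin n) ℂ,
      (∀ A, ∃ B : Matrix (Fin n) (Fin n) ℂ, E A = (1 : Matrix (Fin k) (Fin k) ℂ) ⊗ₖ B) ∧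
      (∀ B : Matrix (Fin n) (Fin n) ℂ,
        E ((1 : Matrix (Fin k) (Fin k) ℂ) ⊗ₖ B) = (1 : Matrix (Fin k) (Fin k) ℂ) ⊗ₖ B) ∧
      (∀ (A : Matrix (Fin k × Fin n) (Fin k × Fin n) ℂ) (B : Matrix (Fin n) (Fin n) ℂ),
        E (((1 : Matrix (Fin k) (Fin k) ℂ) ⊗ₖ B) * A)
          = ((1 : Matrix (Fin k) (Fin k) ℂ) ⊗ₖ B) * E A) ∧
      (∀ A : Matrix (Fin k × Fin n) (Fin k × Fin n) ℂ, A.PosSemidef → (E A).PosSemidef) ∧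
      (∀ A : Matrix (Fin k × Fin n) (Fin k × Fin n) ℂ, (ρ * E A).trace = (ρ * A).trace)) ↔
    (∃ τ : Matrix (Fin k) (Fin k) ℂ, τ.PosSemidef ∧ τ.trace = 1 ∧ ρ = τ ⊗ₖ σ) := by
  constructor
  · rintro ⟨E, h1, h2, h3, h4, h5⟩
    set i0 : Fin k := ⟨0, hk⟩ with hi0
    set j0 : Fin n := ⟨0, hn⟩ with hj0
    choose Φ hΦ using h1
    have hinj : ∀ B B' : Matrix (Fin n) (Fin n) ℂ,
        (1 : Matrix (Fin k) (Fin k) ℂ) ⊗ₖ B = (1 : Matrix (Fin k) (Fin k) ℂ) ⊗ₖ B' → B = B' := by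
      intro B B' h
      ext j j'
      have := congrFun (congrFun h (i0, j)) (i0, j')
      simpa [kroneckerMap_apply, one_apply] using this
    have hstar : ∀ A, E Aᴴ = (E A)ᴴ := star_pres E h4
    have h3' : ∀ (A : Matrix (Fin k × Fin n) (Fin k × Fin n) ℂ) (B : Matrix (Fin n) (Fin n) ℂ),
        E (A * ((1 : Matrix (Fin k) (Fin k) ℂ) ⊗ₖ B))
          = E A * ((1 : Matrix (Fin k) (Fin k) ℂ) ⊗ₖ B) := by
      intro A B
      have e1 : A * ((1 : Matrix (Fin k) (Fin k) ℂ) ⊗ₖ B)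
          = (((1 : Matrix (Fin k) (Fin k) ℂ) ⊗ₖ Bᴴ) * Aᴴ)ᴴ := by
        rw [conjTranspose_mul, kron_conjTranspose, conjTranspose_one,
          conjTranspose_conjTranspose, conjTranspose_conjTranspose]
      rw [e1, hstar, h3, conjTranspose_mul, kron_conjTranspose, conjTranspose_one,
        conjTranspose_conjTranspose, ← hstar, conjTranspose_conjTranspose]
    have hscal : ∀ C : Matrix (Fin k) (Fin k) ℂ,
        Φ (C ⊗ₖ (1 : Matrix (Fin n) (Fin n) ℂ))
          = Φ (C ⊗ₖ (1 : Matrix (Fin n) (Fin n) ℂ)) j0 j0 • (1 : Matrix (Fin n) (Fin n) ℂ) := by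
      intro C
      have hcomm : ∀ B : Matrix (Fin n) (Fin n) ℂ,
          B * Φ (C ⊗ₖ 1) = Φ (C ⊗ₖ 1) * B := by
        intro B
        apply hinj
        have e1 : E (((1 : Matrix (Fin k) (Fin k) ℂ) ⊗ₖ B) * (C ⊗ₖ 1))
            = (1 : Matrix (Fin k) (Fin k) ℂ) ⊗ₖ (B * Φ (C ⊗ₖ 1)) := by
          rw [h3, hΦ, ← mul_kronecker_mul, one_mul]
        have e2 : E ((C ⊗ₖ (1 : Matrix (Fin n) (Fin n) ℂ)) * ((1 : Matrix (Fin k) (Fin k) ℂ) ⊗ₖ B))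
            = (1 : Matrix (Fin k) (Fin k) ℂ) ⊗ₖ (Φ (C ⊗ₖ 1) * B) := by
          rw [h3', hΦ, ← mul_kronecker_mul, mul_one]
        have e3 : ((1 : Matrix (Fin k) (Fin k) ℂ) ⊗ₖ B) * (C ⊗ₖ (1 : Matrix (Fin n) (Fin n) ℂ))
            = (C ⊗ₖ (1 : Matrix (Fin n) (Fin n) ℂ)) * ((1 : Matrix (Fin k) (Fin k) ℂ) ⊗ₖ B) := by
          rw [← mul_kronecker_mul, ← mul_kronecker_mul]
          simp
        rw [← e1, e3, e2]
      obtain ⟨r, hr⟩ := mem_range_scalar_of_commute_single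
        (fun i j _ => hcomm (single i j 1))
      rw [← hr, Matrix.scalar_apply, Matrix.diagonal_apply_eq]
      ext x y
      by_cases hxy : x = y <;>
        simp [Matrix.scalar_apply, Matrix.diagonal_apply, Matrix.one_apply, hxy]
    have key : ∀ (C : Matrix (Fin k) (Fin k) ℂ) (B : Matrix (Fin n) (Fin n) ℂ),
        (ρ * (C ⊗ₖ B)).trace = Φ (C ⊗ₖ 1) j0 j0 * (σ * B).trace := by
      intro C B
      have eCB : E (C ⊗ₖ B)
          = (1 : Matrix (Fin k) (Fin k) ℂ) ⊗ₖ (Φ (C ⊗ₖ 1) j0 j0 • B) := by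
        have hsplit : (C ⊗ₖ B) = ((1 : Matrix (Fin k) (Fin k) ℂ) ⊗ₖ B)
            * (C ⊗ₖ (1 : Matrix (Fin n) (Fin n) ℂ)) := by
          rw [← mul_kronecker_mul, one_mul, mul_one]
        rw [hsplit, h3, hΦ, ← mul_kronecker_mul, one_mul]
        congr 1
        conv_lhs => rw [hscal, Matrix.mul_smul, mul_one]
      calc (ρ * (C ⊗ₖ B)).trace = (ρ * E (C ⊗ₖ B)).trace := (h5 _).symm
      _ = (ρ * ((1 : Matrix (Fin k) (Fin k) ℂ) ⊗ₖ (Φ (C ⊗ₖ 1) j0 j0 • B))).trace := by rw [eCB]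
      _ = (σ * (Φ (C ⊗ₖ 1) j0 j0 • B)).trace := (hσ _).symm
      _ = Φ (C ⊗ₖ 1) j0 j0 * (σ * B).trace := by
          rw [Matrix.mul_smul, trace_smul, smul_eq_mul]
    set τ : Matrix (Fin k) (Fin k) ℂ :=
      Matrix.of fun b a => Φ ((single a b (1:ℂ)) ⊗ₖ (1 : Matrix (Fin n) (Fin n) ℂ)) j0 j0
      with hτdef
    have hfact : ρ = τ ⊗ₖ σ := by
      ext ⟨b, j⟩ ⟨a, j'⟩
      have h := key (single a b 1) (single j' j 1)
      rw [std_kron, trace_mul_std, trace_mul_std] at h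
      simpa [kroneckerMap_apply, hτdef] using h
    have hσtr : σ.trace = 1 := by
      have h := hσ 1
      rw [mul_one, one_kronecker_one, mul_one, hρtr] at h
      exact h
    have hτtr : τ.trace = 1 := by
      have h := hρtr
      rw [hfact, trace_kronecker, hσtr, mul_one] at h
      exact h
    have hdiagρ : ∀ p, 0 ≤ ρ p p := by
      intro p
      have h := hρ.dotProduct_mulVec_nonneg (fun q => if q = p then 1 else 0)
      simpa [dotProduct, mulVec, apply_ite (star : ℂ → ℂ), ite_mul, mul_ite] using h
    have hσentry : ∀ j j', σ j j' = ∑ a, ρ (a, j) (a, j') := by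
      intro j j'
      have h := hσ (single j' j 1)
      rw [trace_mul_std, one_kron_std, Matrix.mul_sum, trace_sum] at h
      rw [h]
      exact Finset.sum_congr rfl fun a _ => trace_mul_std ρ (a, j') (a, j)
    have hσdiag : ∀ j, 0 ≤ σ j j := by
      intro j
      rw [hσentry]
      exact Finset.sum_nonneg fun a _ => hdiagρ _
    obtain ⟨j1, hj1⟩ : ∃ j1, σ j1 j1 ≠ 0 := by
      by_contra h
      push_neg at h
      have : σ.trace = 0 := by
        rw [Matrix.trace]
        exact Finset.sum_eq_zero fun j _ => h j
      rw [hσtr] at this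
      exact one_ne_zero this
    have hs0 : 0 ≤ σ j1 j1 := hσdiag j1
    have hsim : (σ j1 j1).im = 0 := by
      rw [Complex.nonneg_iff] at hs0
      exact hs0.2.symm
    have hsstar : star (σ j1 j1) = σ j1 j1 := by
      rw [Complex.star_def, Complex.conj_eq_iff_im]
      exact hsim
    have hτherm : τ.IsHermitian := by
      ext a b
      have h := congrFun (congrFun hρ.isHermitian.eq ((a, j1) : Fin k × Fin n)) (b, j1)
      rw [conjTranspose_apply, hfact] at h
      simp only [kroneckerMap_apply] at h
      rw [star_mul', hsstar] at h
      rw [conjTranspose_apply]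
      exact mul_right_cancel₀ hj1 h
    have hτpsd : τ.PosSemidef := by
      refine PosSemidef.of_dotProduct_mulVec_nonneg hτherm fun y => ?_
      have hz := hρ.dotProduct_mulVec_nonneg (fun p => if p.2 = j1 then y p.1 else 0)
      rw [hfact] at hz
      have hcomp : star (fun p : Fin k × Fin n => if p.2 = j1 then y p.1 else 0) ⬝ᵥ
          ((τ ⊗ₖ σ) *ᵥ fun p => if p.2 = j1 then y p.1 else 0)
          = (star y ⬝ᵥ τ *ᵥ y) * σ j1 j1 := by
        simp only [dotProduct, mulVec, Pi.star_apply, kroneckerMap_apply,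
          Fintype.sum_prod_type, mul_ite, mul_zero, Finset.sum_ite_eq',
          Finset.mem_univ, if_true, apply_ite (star : ℂ → ℂ), star_zero, ite_mul, zero_mul]
        rw [Finset.sum_mul]
        refine Finset.sum_congr rfl fun a _ => ?_
        simp only [Finset.mul_sum, Finset.sum_mul]
        refine Finset.sum_congr rfl fun b _ => ?_
        ring
      rw [hcomp] at hz
      have hsinv : 0 ≤ (σ j1 j1)⁻¹ := by
        rw [Complex.nonneg_iff] at hs0 ⊢
        constructor
        · rw [Complex.inv_re]
          exact div_nonneg hs0.1 (Complex.normSq_nonneg _)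
        · rw [Complex.inv_im, ← hs0.2]
          simp
      have : star y ⬝ᵥ τ *ᵥ y = ((star y ⬝ᵥ τ *ᵥ y) * σ j1 j1) * (σ j1 j1)⁻¹ := by
        rw [mul_assoc, mul_inv_cancel₀ hj1, mul_one]
      rw [this]
      exact mul_nonneg hz hsinv
    exact ⟨τ, hτpsd, hτtr, hfact⟩
  · rintro ⟨τ, hτ, hτtr, hρστ⟩
    subst hρστ
    obtain ⟨s, hs_herm, hss⟩ := exists_sqrt hτ
    have hstar_s : ∀ a c, star (s a c) = s c a := by
      intro a c
      conv_rhs => rw [← hs_herm, conjTranspose_apply]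
    set Y : Fin k → Matrix (Fin k × Fin n) (Fin n) ℂ :=
      fun c => Matrix.of (fun p j' => s p.1 c * (if p.2 = j' then 1 else 0)) with hY
    set F : Matrix (Fin k × Fin n) (Fin k × Fin n) ℂ → Matrix (Fin n) (Fin n) ℂ :=
      fun A => Matrix.of fun j j' => ∑ a, ∑ b, τ b a * A (a, j) (b, j') with hF
    have hFapp : ∀ A j j', F A j j' = ∑ a, ∑ b, τ b a * A (a, j) (b, j') := fun A j j' => rfl
    have hYapp : ∀ c p j', Y c p j' = s p.1 c * (if p.2 = j' then 1 else 0) := fun c p j' => rfl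
    have hFY : ∀ A, F A = ∑ c, (Y c)ᴴ * A * Y c := by
      intro A
      ext j j'
      rw [Matrix.sum_apply]
      have percY : ∀ c, ((Y c)ᴴ * A * Y c) j j'
          = ∑ b, ∑ a, s c a * (A (a, j) (b, j') * s b c) := by
        intro c
        rw [Matrix.mul_apply, Fintype.sum_prod_type]
        refine Finset.sum_congr rfl fun b _ => ?_
        rw [Finset.sum_eq_single j']
        · rw [Matrix.mul_apply, Fintype.sum_prod_type, Finset.sum_mul]
          refine Finset.sum_congr rfl fun a _ => ?_
          rw [Finset.sum_eq_single j]
          · simp only [conjTranspose_apply, hYapp, if_pos rfl, mul_one, star_mul', star_one,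
              hstar_s]
            simp
            ring
          · intro m _ hm
            simp [hYapp, hm]
          · simp
        · intro m' _ hm'
          simp [hYapp, hm']
        · simp
      rw [Finset.sum_congr rfl fun c _ => percY c, hFapp]
      rw [Finset.sum_comm]
      conv_rhs => rw [Finset.sum_comm]
      refine Finset.sum_congr rfl fun b _ => ?_
      conv_rhs => rw [Finset.sum_comm]
      refine Finset.sum_congr rfl fun a _ => ?_
      rw [← hss, Matrix.mul_apply, Finset.sum_mul]
      refine Finset.sum_congr rfl fun c _ => ?_
      ring
    have hYσ : ∑ c, Y c * σ * (Y c)ᴴ = τ ⊗ₖ σ := by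
      ext ⟨a, j⟩ ⟨b, j'⟩
      rw [Matrix.sum_apply]
      have percY : ∀ c, (Y c * σ * (Y c)ᴴ) (a, j) (b, j')
          = s a c * σ j j' * star (s b c) := by
        intro c
        rw [Matrix.mul_apply]
        rw [Finset.sum_eq_single j']
        · rw [Matrix.mul_apply, Finset.sum_eq_single j]
          · simp [conjTranspose_apply, hYapp]
          · intro m _ hm
            simp [hYapp, Ne.symm hm]
          · simp
        · intro m' _ hm'
          simp [hYapp, Ne.symm hm']
        · simp
      rw [Finset.sum_congr rfl fun c _ => percY c]
      rw [kroneckerMap_apply, ← hss, Matrix.mul_apply, Finset.sum_mul]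
      refine Finset.sum_congr rfl fun c _ => ?_
      rw [hstar_s]
      ring
    have hFadd : ∀ A B, F (A + B) = F A + F B := by
      intro A B
      ext j j'
      simp only [hFapp, Matrix.add_apply, mul_add, Finset.sum_add_distrib]
    have hFsmul : ∀ (c : ℂ) A, F (c • A) = c • F A := by
      intro c A
      ext j j'
      simp only [hFapp, Matrix.smul_apply, smul_eq_mul, Finset.mul_sum]
      refine Finset.sum_congr rfl fun a _ => ?_
      refine Finset.sum_congr rfl fun b _ => ?_
      ring
    refine ⟨{ toFun := fun A => (1 : Matrix (Fin k) (Fin k) ℂ) ⊗ₖ F A,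
              map_add' := ?_, map_smul' := ?_ }, ?_, ?_, ?_, ?_, ?_⟩
    · intro A B
      show (1 : Matrix (Fin k) (Fin k) ℂ) ⊗ₖ F (A + B)
        = (1 : Matrix (Fin k) (Fin k) ℂ) ⊗ₖ F A + (1 : Matrix (Fin k) (Fin k) ℂ) ⊗ₖ F B
      rw [hFadd, kronecker_add]
    · intro c A
      show (1 : Matrix (Fin k) (Fin k) ℂ) ⊗ₖ F (c • A)
        = c • ((1 : Matrix (Fin k) (Fin k) ℂ) ⊗ₖ F A)
      rw [hFsmul, kronecker_smul]
    · intro A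
      exact ⟨F A, rfl⟩
    · intro B
      show (1 : Matrix (Fin k) (Fin k) ℂ) ⊗ₖ F ((1 : Matrix (Fin k) (Fin k) ℂ) ⊗ₖ B)
        = (1 : Matrix (Fin k) (Fin k) ℂ) ⊗ₖ B
      have hFB : F ((1 : Matrix (Fin k) (Fin k) ℂ) ⊗ₖ B) = B := by
        ext j j'
        simp only [hFapp, kroneckerMap_apply, one_apply, mul_ite, mul_one, mul_zero,
          ite_mul, one_mul, zero_mul, Finset.sum_ite_eq, Finset.mem_univ, if_true]
        rw [← Finset.sum_mul,
          show (∑ a, τ a a) = (1 : ℂ) by simpa [Matrix.trace, Matrix.diag] using hτtr, one_mul]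
      rw [hFB]
    · intro A B
      show (1 : Matrix (Fin k) (Fin k) ℂ) ⊗ₖ F (((1 : Matrix (Fin k) (Fin k) ℂ) ⊗ₖ B) * A)
        = ((1 : Matrix (Fin k) (Fin k) ℂ) ⊗ₖ B) * ((1 : Matrix (Fin k) (Fin k) ℂ) ⊗ₖ F A)
      have hmod : F (((1 : Matrix (Fin k) (Fin k) ℂ) ⊗ₖ B) * A) = B * F A := by
        ext j j'
        have hent : ∀ (a b : Fin k) (j2 : Fin n),
            ((((1 : Matrix (Fin k) (Fin k) ℂ) ⊗ₖ B) * A)) (a, j) (b, j2)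
              = ∑ m, B j m * A (a, m) (b, j2) := by
          intro a b j2
          rw [Matrix.mul_apply, Fintype.sum_prod_type]
          simp only [kroneckerMap_apply, one_apply, ite_mul, one_mul, zero_mul, mul_assoc]
          rw [Finset.sum_comm]
          simp only [Finset.sum_ite_eq, Finset.mem_univ, if_true]
        simp only [hFapp, Matrix.mul_apply, hent]
        simp only [Finset.mul_sum]
        conv_rhs => rw [Finset.sum_comm]
        refine Finset.sum_congr rfl fun a _ => ?_
        conv_rhs => rw [Finset.sum_comm]
        refine Finset.sum_congr rfl fun b _ => ?_
        refine Finset.sum_congr rfl fun m _ => ?_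
        ring
      rw [hmod, ← mul_kronecker_mul, one_mul]
    · intro A hA
      show ((1 : Matrix (Fin k) (Fin k) ℂ) ⊗ₖ F A).PosSemidef
      apply Stmt3Aux.one_kron_psd
      rw [hFY]
      exact Finset.sum_induction (fun c => (Y c)ᴴ * A * Y c)
        (fun M : Matrix (Fin n) (Fin n) ℂ => M.PosSemidef)
        (fun a b ha hb => ha.add hb) Matrix.PosSemidef.zero
        (fun c _ => hA.conjTranspose_mul_mul_same (Y c))
    · intro A
      show ((τ ⊗ₖ σ) * ((1 : Matrix (Fin k) (Fin k) ℂ) ⊗ₖ F A)).trace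
        = ((τ ⊗ₖ σ) * A).trace
      rw [← mul_kronecker_mul, mul_one, trace_kronecker, hτtr, one_mul]
      rw [hFY, Finset.mul_sum, trace_sum]
      have percy : ∀ c, (σ * ((Y c)ᴴ * A * Y c)).trace
          = ((Y c * σ * (Y c)ᴴ) * A).trace := by
        intro c
        conv_lhs => rw [trace_mul_comm, Matrix.mul_assoc, trace_mul_comm, ← Matrix.mul_assoc]
      rw [Finset.sum_congr rfl fun c _ => percy c, ← trace_sum, ← Matrix.sum_mul, hYσ]
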